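/- arXiv:1304.3072 — 3 statements merged into one kernel-verified Lean document; each statement's English description precedes it below -/
import Mathlib

section
/- Let d ≥ 1 be an integer, let m > 2 be a real number, and let M ≥ 0. Suppose f : ℝ^d → ℝ is measurable with f ≥ 0 almost everywhere, ∫_{ℝ^d} f dx = 1, and ∫_{ℝ^d} f^m dx ≤ m(M+1). Then ∫_{ℝ^d} (f − 1)_+ dx ≤ 2·√((M+1)/m). -/
open MeasureTheory ENNReal

/-- Lemma 4.1 of the paper (core estimate): if `f ≥ 0` has total mass 1 and
`∫ f^m ≤ m(M+1)`, then the excess mass above level 1 is at most `2√((M+1)/m)`. -/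
theorem excess_mass_estimate (d : ℕ) (hd : 1 ≤ d) (m M : ℝ) (hm : 2 < m) (hM : 0 ≤ M)
    (f : EuclideanSpace ℝ (Fin d) → ℝ) (hmeas : Measurable f)
    (hpos : ∀ᵐ x ∂volume, 0 ≤ f x)
    (hmass : ∫⁻ x, ENNReal.ofReal (f x) ∂volume = 1)
    (hpow : ∫⁻ x, ENNReal.ofReal (f x ^ m) ∂volume ≤ ENNReal.ofReal (m * (M + 1))) :
    ∫⁻ x, ENNReal.ofReal (max (f x - 1) 0) ∂volume
      ≤ ENNReal.ofReal (2 * Real.sqrt ((M + 1) / m)) := by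
  have hm0 : (0:ℝ) < m := by linarith
  set A : Set (EuclideanSpace ℝ (Fin d)) := {x | 1 < f x} with hAdef
  have hAmeas : MeasurableSet A := measurableSet_lt measurable_const hmeas
  have hμA : volume A ≤ 1 := by
    have h1 : 1 * volume {x | (1 : ENNReal) ≤ ENNReal.ofReal (f x)}
        ≤ ∫⁻ x, ENNReal.ofReal (f x) ∂volume :=
      mul_meas_ge_le_lintegral₀ (hmeas.ennreal_ofReal.aemeasurable) 1
    rw [one_mul, hmass] at h1
    refine le_trans (measure_mono ?_) h1
    intro x hx
    exact ENNReal.one_le_ofReal.mpr (le_of_lt hx)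
  set g : EuclideanSpace ℝ (Fin d) → ℝ≥0∞ :=
    fun x => ENNReal.ofReal (f x) ^ (m/2 : ℝ) with hgdef
  set h : EuclideanSpace ℝ (Fin d) → ℝ≥0∞ := A.indicator 1 with hhdef
  have hgmeas : AEMeasurable g volume :=
    hmeas.ennreal_ofReal.aemeasurable.pow_const _
  have hhmeas : AEMeasurable h volume :=
    ((measurable_one.indicator hAmeas)).aemeasurable
  have hpt : ∀ᵐ x ∂volume, ENNReal.ofReal (max (f x - 1) 0)
      ≤ ENNReal.ofReal (2/m) * (g x * h x) := by
    filter_upwards [hpos] with x hx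
    by_cases hx1 : 1 < f x
    · have hxA : x ∈ A := hx1
      have hind : h x = 1 := by simp [hhdef, Set.indicator_of_mem hxA]
      have hg' : g x = ENNReal.ofReal (f x ^ (m/2 : ℝ)) :=
        ENNReal.ofReal_rpow_of_nonneg hx (by positivity)
      rw [hind, mul_one, hg', ← ENNReal.ofReal_mul (by positivity)]
      apply ENNReal.ofReal_le_ofReal
      have hb : 1 + (m/2) * (f x - 1) ≤ (1 + (f x - 1)) ^ ((m/2 : ℝ)) :=
        one_add_mul_self_le_rpow_one_add (by linarith) (by linarith)
      have heq : (1:ℝ) + (f x - 1) = f x := by ring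
      rw [heq] at hb
      have h2 : (m/2) * (f x - 1) ≤ f x ^ (m/2 : ℝ) := by nlinarith
      rw [max_eq_left (by linarith)]
      rw [div_mul_eq_mul_div, le_div_iff₀ hm0]
      nlinarith
    · have : max (f x - 1) 0 = 0 := max_eq_right (by linarith [not_lt.mp hx1])
      simp [this]
  have hg2 : ∫⁻ x, g x ^ (2:ℝ) ∂volume ≤ ENNReal.ofReal (m * (M + 1)) := by
    have hgeq : ∀ᵐ x ∂volume, g x ^ (2:ℝ) = ENNReal.ofReal (f x ^ m) := by
      filter_upwards [hpos] with x hx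
      rw [hgdef]
      rw [← ENNReal.rpow_mul]
      norm_num
      exact ENNReal.ofReal_rpow_of_nonneg hx hm0.le
    rw [lintegral_congr_ae hgeq]
    exact hpow
  have hh2 : ∫⁻ x, h x ^ (2:ℝ) ∂volume ≤ 1 := by
    have hheq : ∀ x, h x ^ (2:ℝ) = h x := by
      intro x
      by_cases hxA : x ∈ A
      · simp [hhdef, Set.indicator_of_mem hxA]
      · simp [hhdef, Set.indicator_of_notMem hxA, ENNReal.zero_rpow_of_pos (by norm_num : (0:ℝ) < 2)]
    simp_rw [hheq, hhdef]
    rw [lintegral_indicator_one hAmeas]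
    exact hμA
  have hconj : (2:ℝ).HolderConjugate 2 := Real.HolderConjugate.two_two
  calc ∫⁻ x, ENNReal.ofReal (max (f x - 1) 0) ∂volume
      ≤ ∫⁻ x, ENNReal.ofReal (2/m) * (g x * h x) ∂volume := lintegral_mono_ae hpt
    _ = ENNReal.ofReal (2/m) * ∫⁻ x, (g * h) x ∂volume := by
        rw [← lintegral_const_mul'' _ (hgmeas.mul hhmeas)]; rfl
    _ ≤ ENNReal.ofReal (2/m) * ((∫⁻ x, g x ^ (2:ℝ) ∂volume) ^ (1/(2:ℝ))
          * (∫⁻ x, h x ^ (2:ℝ) ∂volume) ^ (1/(2:ℝ))) := by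
        gcongr
        exact ENNReal.lintegral_mul_le_Lp_mul_Lq volume hconj hgmeas hhmeas
    _ ≤ ENNReal.ofReal (2/m) * ((ENNReal.ofReal (m * (M + 1))) ^ (1/(2:ℝ))
          * (1:ℝ≥0∞) ^ (1/(2:ℝ))) := by
        gcongr <;> norm_num
    _ = ENNReal.ofReal ((2/m) * (m * (M + 1)) ^ ((1:ℝ)/2)) := by
        rw [ENNReal.one_rpow, mul_one,
          ENNReal.ofReal_rpow_of_nonneg (by positivity) (by norm_num),
          ← ENNReal.ofReal_mul (by positivity)]
    _ ≤ ENNReal.ofReal (2 * Real.sqrt ((M + 1) / m)) := by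
        apply ENNReal.ofReal_le_ofReal
        rw [show ((m * (M + 1)) ^ ((1:ℝ)/2)) = Real.sqrt (m * (M+1)) from
          (Real.sqrt_eq_rpow _).symm]
        have hsm : Real.sqrt m * Real.sqrt m = m := Real.mul_self_sqrt hm0.le
        have hsmpos : 0 < Real.sqrt m := Real.sqrt_pos.mpr hm0
        have h1 : Real.sqrt (m*(M+1)) = Real.sqrt m * Real.sqrt (M+1) :=
          Real.sqrt_mul hm0.le _
        have h2 : Real.sqrt ((M+1)/m) = Real.sqrt (M+1) / Real.sqrt m :=
          Real.sqrt_div (by linarith) m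
        rw [h1, h2]
        rw [div_mul_eq_mul_div, mul_div_assoc]
        have key : Real.sqrt m * Real.sqrt (M+1) / m = Real.sqrt (M+1) / Real.sqrt m := by
          rw [div_eq_div_iff hm0.ne' hsmpos.ne']; linear_combination Real.sqrt (M+1) * hsm
        rw [key]
end

section
/- Let d ≥ 1 be an integer, let m > 2 be a real number, and let M ≥ 0. Suppose f : ℝ^d → ℝ is measurable with f ≥ 0 almost everywhere, ∫_{ℝ^d} f dx = 1, and ∫_{ℝ^d} f^m dx ≤ m(M+1). Then ∫_{ℝ^d} (f − 1)_+^2 dx ≤ 2(M+1)/(m−1). -/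
open MeasureTheory

/-- Pointwise Taylor-type bound: for `t ≥ 1` and `m > 2`, `m(m-1)/2 (t-1)² ≤ t^m`. -/
lemma excess_pointwise {m : ℝ} (hm : 2 < m) {t : ℝ} (ht : 1 ≤ t) :
    m * (m - 1) / 2 * (t - 1) ^ 2 ≤ t ^ m := by
  set g1 : ℝ → ℝ := fun t => t ^ (m - 1) - 1 - (m - 1) * (t - 1) with hg1def
  set g : ℝ → ℝ := fun t => t ^ m - 1 - m * (t - 1) - m * (m - 1) / 2 * (t - 1) ^ 2 with hgdef
  have hd1 : ∀ t : ℝ, HasDerivAt g1 ((m - 1) * t ^ (m - 1 - 1) - (m - 1) * 1) t := by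
    intro t
    have h1 := Real.hasDerivAt_rpow_const (x := t) (p := m - 1) (Or.inr (by linarith))
    have h2 : HasDerivAt (fun t : ℝ => (m - 1) * (t - 1)) ((m - 1) * 1) t :=
      ((hasDerivAt_id t).sub_const 1).const_mul (m - 1)
    exact (h1.sub_const 1).sub h2
  have key1 : ∀ s : ℝ, 1 ≤ s → 0 ≤ g1 s := by
    have hmono : MonotoneOn g1 (Set.Ici 1) := by
      apply monotoneOn_of_deriv_nonneg (convex_Ici 1)
        (fun x _ => (hd1 x).continuousAt.continuousWithinAt)
        (fun x _ => (hd1 x).differentiableAt.differentiableWithinAt)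
      intro x hx
      rw [interior_Ici, Set.mem_Ioi] at hx
      rw [(hd1 x).deriv]
      have h1 : (1 : ℝ) ≤ x ^ (m - 1 - 1) := Real.one_le_rpow hx.le (by linarith)
      nlinarith
    intro s hs
    have h0 : g1 1 = 0 := by simp [hg1def, Real.one_rpow]
    have := hmono (Set.mem_Ici.mpr le_rfl) (Set.mem_Ici.mpr hs) hs
    linarith [h0 ▸ this]
  have hd : ∀ t : ℝ, HasDerivAt g (m * g1 t) t := by
    intro t
    have h1 := Real.hasDerivAt_rpow_const (x := t) (p := m) (Or.inr (by linarith))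
    have h2 : HasDerivAt (fun t : ℝ => m * (t - 1)) (m * 1) t :=
      ((hasDerivAt_id t).sub_const 1).const_mul m
    have h3 : HasDerivAt (fun t : ℝ => m * (m - 1) / 2 * (t - 1) ^ 2)
        (m * (m - 1) / 2 * ((2 : ℕ) * (t - 1) ^ (2 - 1) * 1)) t :=
      (((hasDerivAt_id t).sub_const 1).pow 2).const_mul (m * (m - 1) / 2)
    have := ((h1.sub_const 1).sub h2).sub h3
    refine this.congr_deriv ?_
    simp only [hg1def]
    push_cast
    ring
  have key2 : 0 ≤ g t := by
    have hmono : MonotoneOn g (Set.Ici 1) := by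
      apply monotoneOn_of_deriv_nonneg (convex_Ici 1)
        (fun x _ => (hd x).continuousAt.continuousWithinAt)
        (fun x _ => (hd x).differentiableAt.differentiableWithinAt)
      intro x hx
      rw [interior_Ici, Set.mem_Ioi] at hx
      rw [(hd x).deriv]
      have := key1 x hx.le
      nlinarith
    have h0 : g 1 = 0 := by simp [hgdef, Real.one_rpow]
    have := hmono (Set.mem_Ici.mpr le_rfl) (Set.mem_Ici.mpr ht) ht
    linarith [h0 ▸ this]
  have : (0:ℝ) ≤ 1 + m * (t - 1) := by nlinarith
  simp only [hgdef] at key2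
  linarith

/-- Intermediate L² estimate from the proof of Lemma 4.1 of the paper. -/
theorem excess_mass_L2_estimate (d : ℕ) (hd : 1 ≤ d) (m M : ℝ) (hm : 2 < m) (hM : 0 ≤ M)
    (f : EuclideanSpace ℝ (Fin d) → ℝ) (hmeas : Measurable f)
    (hpos : ∀ᵐ x ∂volume, 0 ≤ f x)
    (hmass : ∫⁻ x, ENNReal.ofReal (f x) ∂volume = 1)
    (hpow : ∫⁻ x, ENNReal.ofReal (f x ^ m) ∂volume ≤ ENNReal.ofReal (m * (M + 1))) :
    ∫⁻ x, ENNReal.ofReal ((max (f x - 1) 0) ^ 2) ∂volume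
      ≤ ENNReal.ofReal (2 * (M + 1) / (m - 1)) := by
  set c : ℝ := 2 / (m * (m - 1)) with hcdef
  have hm1 : (0:ℝ) < m - 1 := by linarith
  have hmm : (0:ℝ) < m * (m - 1) := by nlinarith
  have hc : 0 ≤ c := by positivity
  have hpt : ∀ᵐ x ∂volume, ENNReal.ofReal ((max (f x - 1) 0) ^ 2)
      ≤ ENNReal.ofReal (c * f x ^ m) := by
    filter_upwards [hpos] with x hx
    apply ENNReal.ofReal_le_ofReal
    rcases le_or_gt (f x) 1 with h | h
    · have : max (f x - 1) 0 = 0 := max_eq_right (by linarith)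
      rw [this]
      have h0 : (0:ℝ) ≤ f x ^ m := Real.rpow_nonneg hx m
      nlinarith [mul_nonneg hc h0]
    · have hmax : max (f x - 1) 0 = f x - 1 := max_eq_left (by linarith)
      rw [hmax]
      have key := excess_pointwise hm h.le
      have hc1 : c * (m * (m - 1) / 2) = 1 := by
        rw [hcdef]; field_simp
      have : (f x - 1) ^ 2 = c * (m * (m - 1) / 2 * (f x - 1) ^ 2) := by
        rw [← mul_assoc, hc1, one_mul]
      rw [this]
      exact mul_le_mul_of_nonneg_left key hc
  calc ∫⁻ x, ENNReal.ofReal ((max (f x - 1) 0) ^ 2) ∂volume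
      ≤ ∫⁻ x, ENNReal.ofReal (c * f x ^ m) ∂volume := lintegral_mono_ae hpt
    _ = ∫⁻ x, ENNReal.ofReal c * ENNReal.ofReal (f x ^ m) ∂volume := by
        simp_rw [ENNReal.ofReal_mul hc]
    _ = ENNReal.ofReal c * ∫⁻ x, ENNReal.ofReal (f x ^ m) ∂volume :=
        lintegral_const_mul' _ _ ENNReal.ofReal_ne_top
    _ ≤ ENNReal.ofReal c * ENNReal.ofReal (m * (M + 1)) := mul_le_mul_right hpow _
    _ = ENNReal.ofReal (c * (m * (M + 1))) := (ENNReal.ofReal_mul hc).symm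
    _ = ENNReal.ofReal (2 * (M + 1) / (m - 1)) := by
        congr 1
        rw [hcdef, div_mul_eq_mul_div, div_eq_div_iff hmm.ne' hm1.ne']
        ring
end

section
/- Let 0 < h ≤ 1, let δ be a real number with 0 ≤ δ ≤ h^{3/2}, let M ≥ 0, and let N ≥ 1 be an integer. Let (a_k)_{k≥1} be a sequence of nonnegative real numbers with ∑_{k=1}^{N−1} a_k ≤ M, and let (d_n)_{n≥1} be a sequence of nonnegative real numbers satisfying d_1 ≤ δ and d_n ≤ √(d_{n−1}² + h·a_{n−1}) + δ for all 2 ≤ n ≤ N. Then d_N² ≤ e^{Nh}·(h³ + 2Mh + 2Nh²). -/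
set_option maxHeartbeats 1600000 in
/-- Discrete iteration lemma from Step 4 of the proof of Theorem 4.2 of the paper. -/
theorem discrete_iteration_bound (h δ M : ℝ) (N : ℕ) (hh0 : 0 < h) (hh1 : h ≤ 1)
    (hδ0 : 0 ≤ δ) (hδ : δ ≤ h ^ ((3 : ℝ) / 2)) (hM : 0 ≤ M) (hN : 1 ≤ N)
    (a d : ℕ → ℝ) (ha : ∀ k, 1 ≤ k → 0 ≤ a k) (hd : ∀ n, 1 ≤ n → 0 ≤ d n)
    (hsum : ∑ k ∈ Finset.Icc 1 (N - 1), a k ≤ M)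
    (hd1 : d 1 ≤ δ)
    (hrec : ∀ n, 2 ≤ n → n ≤ N → d n ≤ Real.sqrt (d (n - 1) ^ 2 + h * a (n - 1)) + δ) :
    d N ^ 2 ≤ Real.exp ((N : ℝ) * h) * (h ^ 3 + 2 * M * h + 2 * (N : ℝ) * h ^ 2) := by
  have hδ2 : δ ^ 2 ≤ h ^ 3 := by
    have h1 : δ ^ 2 ≤ (h ^ ((3 : ℝ) / 2)) ^ 2 := pow_le_pow_left₀ hδ0 hδ 2
    have h2 : (h ^ ((3 : ℝ) / 2)) ^ 2 = h ^ (3 : ℕ) := by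
      rw [← Real.rpow_natCast (h ^ ((3 : ℝ) / 2)) 2, ← Real.rpow_mul hh0.le,
        ← Real.rpow_natCast h 3]
      norm_num
    linarith [h1, h2.le, h2.ge]
  have h1h : (1 : ℝ) ≤ 1 + h := by linarith
  have key : ∀ n, 1 ≤ n → n ≤ N →
      d n ^ 2 ≤ (1 + h) ^ n *
        (h ^ 3 + 2 * h * (∑ k ∈ Finset.Icc 1 (n - 1), a k) + 2 * ((n - 1 : ℕ) : ℝ) * h ^ 2) := by
    intro n hn
    induction n, hn using Nat.le_induction with
    | base =>
      intro _
      have he : Finset.Icc 1 0 = (∅ : Finset ℕ) := Finset.Icc_eq_empty (by norm_num)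
      simp only [Nat.sub_self, he, Finset.sum_empty, Nat.cast_zero, pow_one]
      have hd1sq : d 1 ^ 2 ≤ δ ^ 2 := pow_le_pow_left₀ (hd 1 le_rfl) hd1 2
      nlinarith [pow_pos hh0 3]
    | succ n hn1 ih =>
      intro hnN
      obtain ⟨m, rfl⟩ : ∃ m, n = m + 1 := ⟨n - 1, by omega⟩
      simp only [Nat.add_sub_cancel] at ih ⊢
      have hIH := ih (by omega)
      have han : 0 ≤ a (m + 1) := ha _ (by omega)
      have hdn : 0 ≤ d (m + 1) := hd _ (by omega)
      have hx : 0 ≤ d (m + 1) ^ 2 + h * a (m + 1) := by positivity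
      have hsx := Real.sq_sqrt hx
      have hsxn := Real.sqrt_nonneg (d (m + 1) ^ 2 + h * a (m + 1))
      have hrec' : d (m + 1 + 1) ≤ Real.sqrt (d (m + 1) ^ 2 + h * a (m + 1)) + δ := by
        have := hrec (m + 1 + 1) (by omega) hnN
        simpa using this
      have hdn1 : 0 ≤ d (m + 1 + 1) := hd _ (by omega)
      have cross : 2 * Real.sqrt (d (m + 1) ^ 2 + h * a (m + 1)) * δ
          ≤ h * (d (m + 1) ^ 2 + h * a (m + 1)) + h ^ 2 := by
        nlinarith [sq_nonneg (h * Real.sqrt (d (m + 1) ^ 2 + h * a (m + 1)) - δ), hh0, hδ2,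
          sq_nonneg δ]
      have hstep : d (m + 1 + 1) ^ 2
          ≤ (1 + h) * (d (m + 1) ^ 2 + h * a (m + 1)) + 2 * h ^ 2 := by
        have hsq : d (m + 1 + 1) ^ 2
            ≤ (Real.sqrt (d (m + 1) ^ 2 + h * a (m + 1)) + δ) ^ 2 :=
          pow_le_pow_left₀ hdn1 hrec' 2
        nlinarith [hδ2, pow_le_pow_left₀ hh0.le hh1 3, sq_nonneg δ]
      have hsum_split : (∑ k ∈ Finset.Icc 1 (m + 1), a k)
          = (∑ k ∈ Finset.Icc 1 m, a k) + a (m + 1) :=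
        Finset.sum_Icc_succ_top (by omega) a
      have hS0 : 0 ≤ ∑ k ∈ Finset.Icc 1 m, a k :=
        Finset.sum_nonneg fun k hk => ha k (Finset.mem_Icc.mp hk).1
      have hpow1 : (1 : ℝ) ≤ (1 + h) ^ (m + 2) := one_le_pow₀ h1h
      have hpow0 : (0 : ℝ) ≤ (1 + h) ^ (m + 1) := by positivity
      rw [hsum_split]
      have hT0 : 0 ≤ h ^ 3 + 2 * h * (∑ k ∈ Finset.Icc 1 m, a k) + 2 * (m : ℝ) * h ^ 2 := by
        have : (0:ℝ) ≤ (m : ℝ) := Nat.cast_nonneg _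
        nlinarith [pow_pos hh0 3, sq_nonneg h]
      have H1 : (1 + h) * (d (m + 1) ^ 2) ≤ (1 + h) ^ (m + 2) *
          (h ^ 3 + 2 * h * (∑ k ∈ Finset.Icc 1 m, a k) + 2 * (m : ℝ) * h ^ 2) := by
        have h2 := mul_le_mul_of_nonneg_left hIH (show (0:ℝ) ≤ 1 + h by linarith)
        calc (1 + h) * (d (m + 1) ^ 2)
            ≤ (1 + h) * ((1 + h) ^ (m + 1) *
              (h ^ 3 + 2 * h * (∑ k ∈ Finset.Icc 1 m, a k) + 2 * (m : ℝ) * h ^ 2)) := h2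
          _ = (1 + h) ^ (m + 2) *
              (h ^ 3 + 2 * h * (∑ k ∈ Finset.Icc 1 m, a k) + 2 * (m : ℝ) * h ^ 2) := by ring
      have H2 : 2 * h * a (m + 1) ≤ (1 + h) ^ (m + 2) * (2 * h * a (m + 1)) :=
        le_mul_of_one_le_left (by positivity) hpow1
      have H3 : 2 * h ^ 2 ≤ (1 + h) ^ (m + 2) * (2 * h ^ 2) :=
        le_mul_of_one_le_left (by positivity) hpow1
      have H4 : (1 + h) * (h * a (m + 1)) ≤ 2 * h * a (m + 1) := by
        nlinarith [mul_nonneg hh0.le han]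
      have hgoal : d (m + 1 + 1) ^ 2 ≤ (1 + h) ^ (m + 2) *
          ((h ^ 3 + 2 * h * (∑ k ∈ Finset.Icc 1 m, a k) + 2 * (m : ℝ) * h ^ 2)
            + 2 * h * a (m + 1) + 2 * h ^ 2) := by nlinarith [hstep, H1, H2, H3, H4]
      calc d (m + 1 + 1) ^ 2 ≤ (1 + h) ^ (m + 2) *
          ((h ^ 3 + 2 * h * (∑ k ∈ Finset.Icc 1 m, a k) + 2 * (m : ℝ) * h ^ 2)
            + 2 * h * a (m + 1) + 2 * h ^ 2) := hgoal
        _ = (1 + h) ^ (m + 1 + 1) * (h ^ 3 + 2 * h *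
            ((∑ k ∈ Finset.Icc 1 m, a k) + a (m + 1)) + 2 * ((m : ℝ) + 1) * h ^ 2) := by ring
        _ = (1 + h) ^ (m + 1 + 1) * (h ^ 3 + 2 * h *
            ((∑ k ∈ Finset.Icc 1 m, a k) + a (m + 1)) + 2 * ((m + 1 : ℕ) : ℝ) * h ^ 2) := by
            push_cast; ring
  have hkeyN := key N hN le_rfl
  have hexp : (1 + h) ^ N ≤ Real.exp ((N : ℝ) * h) := by
    have h1 : 1 + h ≤ Real.exp h := by linarith [Real.add_one_le_exp h]
    calc (1 + h) ^ N ≤ (Real.exp h) ^ N := pow_le_pow_left₀ (by linarith) h1 N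
      _ = Real.exp ((N : ℝ) * h) := by rw [← Real.exp_nat_mul]
  have hSle : h ^ 3 + 2 * h * (∑ k ∈ Finset.Icc 1 (N - 1), a k) + 2 * ((N - 1 : ℕ) : ℝ) * h ^ 2
      ≤ h ^ 3 + 2 * M * h + 2 * (N : ℝ) * h ^ 2 := by
    have h1 : ((N - 1 : ℕ) : ℝ) ≤ (N : ℝ) := by
      exact_mod_cast Nat.cast_le.mpr (Nat.sub_le N 1)
    nlinarith [hsum, sq_nonneg h, hh0]
  have hS0' : 0 ≤ h ^ 3 + 2 * h * (∑ k ∈ Finset.Icc 1 (N - 1), a k) + 2 * ((N - 1 : ℕ) : ℝ) * h ^ 2 := by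
    have hs0 : 0 ≤ ∑ k ∈ Finset.Icc 1 (N - 1), a k :=
      Finset.sum_nonneg fun k hk => ha k (Finset.mem_Icc.mp hk).1
    have : (0:ℝ) ≤ ((N - 1 : ℕ) : ℝ) := Nat.cast_nonneg _
    nlinarith [pow_pos hh0 3]
  calc d N ^ 2 ≤ (1 + h) ^ N *
      (h ^ 3 + 2 * h * (∑ k ∈ Finset.Icc 1 (N - 1), a k) + 2 * ((N - 1 : ℕ) : ℝ) * h ^ 2) := hkeyN
    _ ≤ Real.exp ((N : ℝ) * h) * (h ^ 3 + 2 * M * h + 2 * (N : ℝ) * h ^ 2) :=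
        mul_le_mul hexp hSle hS0' (Real.exp_nonneg _)
end
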